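/- Let S_n be star bodies in R^d with distance functions f_n converging uniformly on the unit ball to the distance function f of a star body S, and let L_n be lattices converging to a lattice L. Then for each i = 1,...,d, limsup_{n -> infinity} lambda_i(S_n, L_n) <= lambda_i(S, L). That is, the successive minima are upper semicontinuous in (S, L). -/

import Mathlib

def IsDistanceFunction {d : ℕ} (f : EuclideanSpace ℝ (Fin d) → ℝ) : Prop :=
  (∀ x, 0 ≤ f x) ∧ Continuous f ∧ ∀ (t : ℝ) (x), 0 ≤ t → f (t • x) = t * f x

def zspan {d : ℕ} (b : Fin d → EuclideanSpace ℝ (Fin d)) : Set (EuclideanSpace ℝ (Fin d)) :=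
  {x | ∃ c : Fin d → ℤ, x = ∑ i, (c i : ℝ) • b i}

def IsLattice {d : ℕ} (L : Set (EuclideanSpace ℝ (Fin d))) : Prop :=
  ∃ b : Fin d → EuclideanSpace ℝ (Fin d), LinearIndependent ℝ b ∧ L = zspan b

/-- The `i`-th successive minimum of the distance function `f` with respect to `L`:
the infimum over `i`-tuples of linearly independent points of `L` of the maximum
of their `f`-values (`∞` if no such tuple exists). -/
noncomputable def minima {d : ℕ} (f : EuclideanSpace ℝ (Fin d) → ℝ)
    (L : Set (EuclideanSpace ℝ (Fin d))) (i : ℕ) : ENNReal :=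
  ⨅ (l : Fin i → EuclideanSpace ℝ (Fin d))
    (_ : (∀ j, l j ∈ L) ∧ LinearIndependent ℝ l),
    ⨆ j, ENNReal.ofReal (f (l j))

def LatticeTendsto {d : ℕ} (L : ℕ → Set (EuclideanSpace ℝ (Fin d)))
    (L₀ : Set (EuclideanSpace ℝ (Fin d))) : Prop :=
  ∃ (bn : ℕ → Fin d → EuclideanSpace ℝ (Fin d)) (b : Fin d → EuclideanSpace ℝ (Fin d)),
    (∀ n, LinearIndependent ℝ (bn n) ∧ L n = zspan (bn n)) ∧
    (LinearIndependent ℝ b ∧ L₀ = zspan b) ∧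
    ∀ j, Filter.Tendsto (fun n => bn n j) Filter.atTop (nhds (b j))


open Filter Topology

section Aux
variable {d i : ℕ}

noncomputable abbrev combMap (b : Fin d → EuclideanSpace ℝ (Fin d)) :
    (Fin d → ℝ) →ₗ[ℝ] EuclideanSpace ℝ (Fin d) :=
  Fintype.linearCombination ℝ b

lemma combMap_ker (b : Fin d → EuclideanSpace ℝ (Fin d)) (hb : LinearIndependent ℝ b) :
    LinearMap.ker (combMap b) = ⊥ := by
  rw [LinearMap.ker_eq_bot']
  intro m hm
  exact funext (Fintype.linearIndependent_iff.mp hb m hm)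

lemma li_comb (b : Fin d → EuclideanSpace ℝ (Fin d)) (hb : LinearIndependent ℝ b)
    (r : Fin i → Fin d → ℝ) (hr : LinearIndependent ℝ r) :
    LinearIndependent ℝ (fun j => ∑ k, r j k • b k) := by
  have := hr.map' (combMap b) (combMap_ker b hb)
  simpa [Function.comp_def, Fintype.linearCombination_apply] using this

lemma li_coords (b : Fin d → EuclideanSpace ℝ (Fin d))
    (r : Fin i → Fin d → ℝ)
    (h : LinearIndependent ℝ (fun j => ∑ k, r j k • b k)) :
    LinearIndependent ℝ r := by
  apply LinearIndependent.of_comp (combMap b)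
  simpa [Function.comp_def, Fintype.linearCombination_apply] using h

lemma distfun_tendsto {f : ℕ → EuclideanSpace ℝ (Fin d) → ℝ}
    {g : EuclideanSpace ℝ (Fin d) → ℝ}
    (hf : ∀ n, IsDistanceFunction (f n)) (hg : IsDistanceFunction g)
    (hconv : TendstoUniformlyOn f g atTop (Metric.closedBall 0 1))
    {x : ℕ → EuclideanSpace ℝ (Fin d)} {x₀ : EuclideanSpace ℝ (Fin d)}
    (hx : Tendsto x atTop (𝓝 x₀)) :
    Tendsto (fun n => f n (x n)) atTop (𝓝 (g x₀)) := by
  set R : ℝ := ‖x₀‖ + 1 with hR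
  have hR0 : (0:ℝ) < R := by positivity
  have hnorm : ∀ᶠ n in atTop, ‖x n‖ ≤ R := by
    have h1 : Tendsto (fun n => ‖x n‖) atTop (𝓝 ‖x₀‖) := hx.norm
    exact h1.eventually_le_const (by simp [hR])
  have hdiff : Tendsto (fun n => f n (x n) - g (x n)) atTop (𝓝 0) := by
    rw [NormedAddCommGroup.tendsto_nhds_zero]
    intro ε hε
    have hconv' := Metric.tendstoUniformlyOn_iff.mp hconv (ε / R) (by positivity)
    filter_upwards [hconv', hnorm] with n hn hxn
    set y := R⁻¹ • x n with hy'
    have hy : y ∈ Metric.closedBall (0:EuclideanSpace ℝ (Fin d)) 1 := by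
      rw [Metric.mem_closedBall, dist_zero_right, hy', norm_smul,
        norm_inv, Real.norm_eq_abs, abs_of_pos hR0]
      rw [inv_mul_le_iff₀ hR0, mul_one]
      exact hxn
    have hxny : x n = R • y := by
      rw [hy', smul_smul, mul_inv_cancel₀ (ne_of_gt hR0), one_smul]
    have h1 : f n (x n) = R * f n y := by rw [hxny, (hf n).2.2 R y hR0.le]
    have h2 : g (x n) = R * g y := by rw [hxny, hg.2.2 R y hR0.le]
    have h3 := hn y hy
    rw [Real.dist_eq] at h3
    rw [h1, h2]
    have h4 : ‖R * f n y - R * g y‖ = R * |g y - f n y| := by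
      rw [Real.norm_eq_abs, ← mul_sub, abs_mul, abs_of_pos hR0, abs_sub_comm]
    rw [h4]
    calc R * |g y - f n y| < R * (ε / R) := mul_lt_mul_of_pos_left h3 hR0
      _ = ε := by field_simp
  have hgx : Tendsto (fun n => g (x n)) atTop (𝓝 (g x₀)) := (hg.2.1.tendsto x₀).comp hx
  have h5 := hdiff.add hgx
  simpa using h5

end Aux

theorem successive_minima_upper_semicontinuous (d : ℕ)
    (f : ℕ → EuclideanSpace ℝ (Fin d) → ℝ) (g : EuclideanSpace ℝ (Fin d) → ℝ)
    (hf : ∀ n, IsDistanceFunction (f n)) (hg : IsDistanceFunction g)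
    (hconv : TendstoUniformlyOn f g Filter.atTop (Metric.closedBall 0 1))
    (L : ℕ → Set (EuclideanSpace ℝ (Fin d))) (L₀ : Set (EuclideanSpace ℝ (Fin d)))
    (hL : LatticeTendsto L L₀) (i : ℕ) (hi : 1 ≤ i) (hid : i ≤ d) :
    Filter.limsup (fun n => minima (f n) (L n) i) Filter.atTop ≤ minima g L₀ i := by
  obtain ⟨bn, b, hbn, hb, htend⟩ := hL
  rw [minima]
  refine le_iInf fun l => le_iInf fun hl => ?_
  -- express l in terms of b
  have hmem : ∀ j, l j ∈ zspan b := fun j => hb.2 ▸ hl.1 j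
  choose c hc using hmem
  set r : Fin i → Fin d → ℝ := fun j k => (c j k : ℝ) with hr'
  have hlr : ∀ j, l j = ∑ k, r j k • b k := hc
  have hrli : LinearIndependent ℝ r := by
    apply li_coords b r
    have : (fun j => ∑ k, r j k • b k) = l := by
      ext1 j; rw [← hlr j]
    rw [this]; exact hl.2
  set ln : ℕ → Fin i → EuclideanSpace ℝ (Fin d) := fun n j => ∑ k, r j k • bn n k with hln'
  have hlnmem : ∀ n j, ln n j ∈ L n := fun n j => by
    rw [(hbn n).2]; exact ⟨c j, rfl⟩
  have hlnli : ∀ n, LinearIndependent ℝ (ln n) := fun n => li_comb (bn n) (hbn n).1 r hrli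
  have hlntend : ∀ j, Filter.Tendsto (fun n => ln n j) Filter.atTop (𝓝 (l j)) := by
    intro j
    rw [hlr j]
    exact tendsto_finset_sum _ fun k _ => (htend k).const_smul (r j k)
  have hftend : ∀ j, Filter.Tendsto (fun n => f n (ln n j)) Filter.atTop (𝓝 (g (l j))) :=
    fun j => distfun_tendsto hf hg hconv (hlntend j)
  set A : ENNReal := ⨆ j, ENNReal.ofReal (g (l j)) with hA
  refine le_of_forall_gt_imp_ge_of_dense fun b' hb' => ?_
  refine Filter.limsup_le_of_le ?_ ?_
  · isBoundedDefault
  have hev : ∀ j, ∀ᶠ n in Filter.atTop, ENNReal.ofReal (f n (ln n j)) < b' := by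
    intro j
    have h1 : Filter.Tendsto (fun n => ENNReal.ofReal (f n (ln n j))) Filter.atTop
        (𝓝 (ENNReal.ofReal (g (l j)))) :=
      (ENNReal.continuous_ofReal.tendsto _).comp (hftend j)
    exact h1.eventually_lt_const (lt_of_le_of_lt (le_iSup _ j) hb')
  have hev' : ∀ᶠ n in Filter.atTop, ∀ j, ENNReal.ofReal (f n (ln n j)) < b' :=
    Filter.eventually_all.mpr hev
  filter_upwards [hev'] with n hn
  calc minima (f n) (L n) i ≤ ⨆ j, ENNReal.ofReal (f n (ln n j)) :=
        iInf₂_le (ln n) ⟨hlnmem n, hlnli n⟩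
    _ ≤ b' := iSup_le fun j => (hn j).le
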